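/- Let a, b, d, e ∈ ℂ be such that neither d nor e is a non-positive integer, Re(d + e − a − b − 2) > 0, and (a−1)(b−1) = (d−2)(e−2). Then ₃F₂(a, b, 2; d, e; 1) = (d−1)(e−1)/(d + e − a − b − 2). -/

import Mathlib

open Filter Finset Topology

noncomputable def poch (a : ℂ) (k : ℕ) : ℂ := Polynomial.eval a (ascPochhammer ℂ k)

noncomputable def F32 (a b c d e : ℂ) : ℂ :=
  ∑' k : ℕ, (poch a k * poch b k * poch c k) / (poch d k * poch e k * (k.factorial : ℂ))

lemma poch_zero' (a : ℂ) : poch a 0 = 1 := by simp [poch]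

lemma poch_succ (a : ℂ) (k : ℕ) : poch a (k + 1) = poch a k * (a + k) := by
  simp [poch, ascPochhammer_succ_right]

lemma poch_eq_prod (a : ℂ) (k : ℕ) : poch a k = ∏ j ∈ Finset.range k, (a + j) := by
  induction k with
  | zero => simp [poch]
  | succ n ih => rw [poch_succ, ih, Finset.prod_range_succ]

lemma poch_ne_zero {a : ℂ} (h : ∀ m : ℕ, a ≠ -(m : ℂ)) (k : ℕ) : poch a k ≠ 0 := by
  rw [poch_eq_prod]
  exact Finset.prod_ne_zero_iff.2 fun j _ hj => h j (by linear_combination hj)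

lemma poch_eq_zero {m : ℕ} {a : ℂ} (ha : a = -(m : ℂ)) {k : ℕ} (hk : m < k) :
    poch a k = 0 := by
  rw [poch_eq_prod]
  exact Finset.prod_eq_zero (Finset.mem_range.2 hk) (by rw [ha]; ring)

lemma poch_two (k : ℕ) : poch 2 k = ((k + 1).factorial : ℂ) := by
  induction k with
  | zero => simp [poch]
  | succ n ih =>
    rw [poch_succ, ih, Nat.factorial_succ (n + 1)]
    push_cast
    ring

noncomputable def rAux (a b d e : ℂ) (k : ℕ) : ℂ :=
  poch a k * poch b k / (poch d k * poch e k)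

noncomputable def uAux (a b d e : ℂ) (k : ℕ) : ℂ :=
  rAux a b d e k * ((k : ℂ) ^ 2 + (d + e - 2) * k + (d - 1) * (e - 1)) / (d + e - a - b - 2)

lemma poch_repr {z : ℂ} (hz : ∀ m : ℕ, z ≠ -(m : ℂ)) {n : ℕ} (hn : 0 < n) :
    Complex.GammaSeq z n ≠ 0 ∧
      poch z (n + 1) = (n : ℂ) ^ z * (n.factorial : ℂ) / Complex.GammaSeq z n := by
  have hp : poch z (n + 1) ≠ 0 := poch_ne_zero hz _
  have hn0 : (n : ℂ) ≠ 0 := Nat.cast_ne_zero.2 hn.ne'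
  have hnum : (n : ℂ) ^ z * (n.factorial : ℂ) ≠ 0 :=
    mul_ne_zero (fun h => hn0 ((Complex.cpow_eq_zero_iff _ _).1 h).1)
      (Nat.cast_ne_zero.2 n.factorial_ne_zero)
  have hG : Complex.GammaSeq z n = (n : ℂ) ^ z * (n.factorial : ℂ) / poch z (n + 1) := by
    rw [Complex.GammaSeq, ← poch_eq_prod]
  have hGne : Complex.GammaSeq z n ≠ 0 := hG ▸ div_ne_zero hnum hp
  refine ⟨hGne, ?_⟩
  rw [eq_div_iff hGne, hG]
  field_simp

lemma rAux_repr {a b d e : ℂ} (ha : ∀ m : ℕ, a ≠ -(m : ℂ)) (hb : ∀ m : ℕ, b ≠ -(m : ℂ))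
    (hd : ∀ m : ℕ, d ≠ -(m : ℂ)) (he : ∀ m : ℕ, e ≠ -(m : ℂ)) {n : ℕ} (hn : 0 < n) :
    rAux a b d e (n + 1) = (n : ℂ) ^ (a + b - d - e) *
      (Complex.GammaSeq d n * Complex.GammaSeq e n /
        (Complex.GammaSeq a n * Complex.GammaSeq b n)) := by
  obtain ⟨hGa, hra⟩ := poch_repr ha hn
  obtain ⟨hGb, hrb⟩ := poch_repr hb hn
  obtain ⟨hGd, hrd⟩ := poch_repr hd hn
  obtain ⟨hGe, hre⟩ := poch_repr he hn
  have hn0 : (n : ℂ) ≠ 0 := Nat.cast_ne_zero.2 hn.ne'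
  have hf : (n.factorial : ℂ) ≠ 0 := Nat.cast_ne_zero.2 n.factorial_ne_zero
  have hcp : ∀ z : ℂ, (n : ℂ) ^ z ≠ 0 := fun z h => hn0 ((Complex.cpow_eq_zero_iff _ _).1 h).1
  have hca := hcp a; have hcb := hcp b; have hcd := hcp d; have hce := hcp e
  have hab : (n : ℂ) ^ a * (n : ℂ) ^ b
      = (n : ℂ) ^ (a + b - d - e) * ((n : ℂ) ^ d * (n : ℂ) ^ e) := by
    rw [← Complex.cpow_add _ _ hn0, ← Complex.cpow_add _ _ hn0, ← Complex.cpow_add _ _ hn0]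
    congr 1
    ring
  rw [rAux, hra, hrb, hrd, hre]
  field_simp [hca, hcb, hcd, hce]
  linear_combination hab

lemma rAux_bound (a b d e : ℂ)
    (hd : ∀ m : ℕ, d ≠ -(m : ℂ)) (he : ∀ m : ℕ, e ≠ -(m : ℂ)) :
    ∃ M : ℝ, ∀ᶠ n : ℕ in atTop,
      ‖rAux a b d e (n + 1)‖ ≤ M * (n : ℝ) ^ ((a + b - d - e).re) := by
  by_cases hA : ∃ m : ℕ, a = -(m : ℂ)
  · obtain ⟨m, hm⟩ := hA
    refine ⟨0, ?_⟩
    filter_upwards [eventually_ge_atTop m] with n hn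
    have : poch a (n + 1) = 0 := poch_eq_zero hm (by omega)
    simp [rAux, this]
  by_cases hB : ∃ m : ℕ, b = -(m : ℂ)
  · obtain ⟨m, hm⟩ := hB
    refine ⟨0, ?_⟩
    filter_upwards [eventually_ge_atTop m] with n hn
    have : poch b (n + 1) = 0 := poch_eq_zero hm (by omega)
    simp [rAux, this]
  push_neg at hA hB
  set L : ℂ := Complex.Gamma d * Complex.Gamma e / (Complex.Gamma a * Complex.Gamma b) with hL
  have hC : Tendsto (fun n => Complex.GammaSeq d n * Complex.GammaSeq e n /
      (Complex.GammaSeq a n * Complex.GammaSeq b n)) atTop (𝓝 L) := by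
    refine Tendsto.div ((Complex.GammaSeq_tendsto_Gamma d).mul
      (Complex.GammaSeq_tendsto_Gamma e)) ((Complex.GammaSeq_tendsto_Gamma a).mul
      (Complex.GammaSeq_tendsto_Gamma b)) ?_
    exact mul_ne_zero (Complex.Gamma_ne_zero hA) (Complex.Gamma_ne_zero hB)
  have hBd : ∀ᶠ n : ℕ in atTop, ‖Complex.GammaSeq d n * Complex.GammaSeq e n /
      (Complex.GammaSeq a n * Complex.GammaSeq b n)‖ ≤ ‖L‖ + 1 :=
    hC.norm.eventually (eventually_le_nhds (lt_add_one _))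
  refine ⟨‖L‖ + 1, ?_⟩
  filter_upwards [hBd, eventually_gt_atTop 0] with n hCn hn
  rw [rAux_repr hA hB hd he hn, norm_mul, Complex.norm_natCast_cpow_of_pos hn]
  calc (n : ℝ) ^ (a + b - d - e).re * ‖_‖ ≤ (n : ℝ) ^ (a + b - d - e).re * (‖L‖ + 1) := by
        gcongr
    _ = (‖L‖ + 1) * (n : ℝ) ^ (a + b - d - e).re := by ring

lemma re_aux {a b d e : ℂ} (hconv : 0 < (d + e - a - b - 2).re) :
    (a + b - d - e).re = -(d + e - a - b - 2).re - 2 := by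
  simp [Complex.sub_re, Complex.add_re]
  norm_num
  ring

lemma summable_t (a b d e : ℂ)
    (hd : ∀ m : ℕ, d ≠ -(m : ℂ)) (he : ∀ m : ℕ, e ≠ -(m : ℂ))
    (hconv : 0 < (d + e - a - b - 2).re) :
    Summable (fun k : ℕ => rAux a b d e k * ((k : ℂ) + 1)) := by
  obtain ⟨M, hM⟩ := rAux_bound a b d e hd he
  set x : ℝ := (a + b - d - e).re with hx
  have hx1 : x + 1 < -1 := by rw [hx, re_aux hconv]; linarith
  rw [← summable_nat_add_iff 1]
  apply Summable.of_norm_bounded_eventually_nat (g := fun n => (3 * M) * (n : ℝ) ^ (x + 1))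
  · exact (Real.summable_nat_rpow.2 hx1).mul_left _
  · filter_upwards [hM, eventually_ge_atTop 1] with n hn h1
    have hν : (1 : ℝ) ≤ (n : ℝ) := by exact_mod_cast h1
    have hν0 : (0 : ℝ) < (n : ℝ) := by linarith
    have hnn : (0 : ℝ) ≤ M * (n : ℝ) ^ x := le_trans (norm_nonneg _) hn
    have hnorm2 : ‖((n + 1 : ℕ) : ℂ) + 1‖ = (n : ℝ) + 2 := by
      rw [show ((n + 1 : ℕ) : ℂ) + 1 = ((n + 2 : ℕ) : ℂ) by push_cast; ring]
      rw [Complex.norm_natCast]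
      push_cast
      ring
    rw [norm_mul, hnorm2]
    calc ‖rAux a b d e (n + 1)‖ * ((n : ℝ) + 2)
        ≤ (M * (n : ℝ) ^ x) * ((n : ℝ) + 2) := by gcongr
      _ ≤ (M * (n : ℝ) ^ x) * (3 * (n : ℝ)) := by gcongr <;> linarith
      _ = (3 * M) * ((n : ℝ) ^ x * (n : ℝ)) := by ring
      _ = (3 * M) * (n : ℝ) ^ (x + 1) := by rw [Real.rpow_add_one hν0.ne']

lemma u_tendsto (a b d e : ℂ)
    (hd : ∀ m : ℕ, d ≠ -(m : ℂ)) (he : ∀ m : ℕ, e ≠ -(m : ℂ))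
    (hconv : 0 < (d + e - a - b - 2).re) :
    Tendsto (uAux a b d e) atTop (𝓝 0) := by
  obtain ⟨M, hM⟩ := rAux_bound a b d e hd he
  set x : ℝ := (a + b - d - e).re with hx
  set s : ℂ := d + e - a - b - 2 with hs
  have hs0 : s ≠ 0 := fun h => by simp [h] at hconv
  set K : ℝ := 1 + ‖d + e - 2‖ + ‖(d - 1) * (e - 1)‖ with hK
  rw [← tendsto_add_atTop_iff_nat 1]
  have hg : Tendsto (fun n : ℕ => (4 * K * M / ‖s‖) * (n : ℝ) ^ (x + 2)) atTop (𝓝 0) := by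
    have h1 : Tendsto (fun y : ℝ => y ^ (x + 2)) atTop (𝓝 0) := by
      rw [show x + 2 = -(s.re) by rw [hx, re_aux hconv]; ring]
      exact tendsto_rpow_neg_atTop hconv
    have := (h1.comp tendsto_natCast_atTop_atTop).const_mul (4 * K * M / ‖s‖)
    simpa using this
  apply squeeze_zero_norm' _ hg
  filter_upwards [hM, eventually_ge_atTop 1] with n hn h1
  have hν : (1 : ℝ) ≤ (n : ℝ) := by exact_mod_cast h1
  have hν0 : (0 : ℝ) < (n : ℝ) := by linarith
  have hnn : (0 : ℝ) ≤ M * (n : ℝ) ^ x := le_trans (norm_nonneg _) hn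
  have hq : ‖(((n + 1 : ℕ) : ℂ)) ^ 2 + (d + e - 2) * ((n + 1 : ℕ) : ℂ) + (d - 1) * (e - 1)‖
      ≤ K * ((n : ℝ) + 1) ^ 2 := by
    have h2 : ‖(((n + 1 : ℕ) : ℂ)) ^ 2‖ = ((n : ℝ) + 1) ^ 2 := by
      rw [norm_pow, Complex.norm_natCast]; push_cast; ring
    have h3 : ‖(d + e - 2) * ((n + 1 : ℕ) : ℂ)‖ = ‖d + e - 2‖ * ((n : ℝ) + 1) := by
      rw [norm_mul, Complex.norm_natCast]; push_cast; ring
    calc ‖_ + _ + _‖ ≤ ‖(((n + 1 : ℕ) : ℂ)) ^ 2 + (d + e - 2) * ((n + 1 : ℕ) : ℂ)‖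
          + ‖(d - 1) * (e - 1)‖ := norm_add_le _ _
      _ ≤ ‖(((n + 1 : ℕ) : ℂ)) ^ 2‖ + ‖(d + e - 2) * ((n + 1 : ℕ) : ℂ)‖
          + ‖(d - 1) * (e - 1)‖ := add_le_add (norm_add_le _ _) le_rfl
      _ = ((n : ℝ) + 1) ^ 2 + ‖d + e - 2‖ * ((n : ℝ) + 1) + ‖(d - 1) * (e - 1)‖ := by
          rw [h2, h3]
      _ ≤ K * ((n : ℝ) + 1) ^ 2 := by
          have e1 : (n : ℝ) + 1 ≤ ((n : ℝ) + 1) ^ 2 := by nlinarith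
          have e2 : (1 : ℝ) ≤ ((n : ℝ) + 1) ^ 2 := by nlinarith
          have e3 := mul_le_mul_of_nonneg_left e1 (norm_nonneg (d + e - 2))
          have e4 := mul_le_mul_of_nonneg_left e2 (norm_nonneg ((d - 1) * (e - 1)))
          rw [hK]
          nlinarith [e3, e4]
  have hK0 : 0 ≤ K := by positivity
  have hs' : 0 < ‖s‖ := norm_pos_iff.2 hs0
  have hxx : (n : ℝ) ^ x * (n : ℝ) ^ 2 = (n : ℝ) ^ (x + 2) := by
    rw [← Real.rpow_natCast (n : ℝ) 2, ← Real.rpow_add hν0]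
    norm_num
  have hu : ‖uAux a b d e (n + 1)‖ = ‖rAux a b d e (n + 1)‖ *
      ‖(((n + 1 : ℕ) : ℂ)) ^ 2 + (d + e - 2) * ((n + 1 : ℕ) : ℂ) + (d - 1) * (e - 1)‖ / ‖s‖ := by
    rw [uAux, hs, norm_div, norm_mul]
  rw [hu, div_le_iff₀ hs']
  have h4 : ((n : ℝ) + 1) ^ 2 ≤ 4 * (n : ℝ) ^ 2 := by nlinarith
  calc ‖rAux a b d e (n + 1)‖ *
      ‖(((n + 1 : ℕ) : ℂ)) ^ 2 + (d + e - 2) * ((n + 1 : ℕ) : ℂ) + (d - 1) * (e - 1)‖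
      ≤ (M * (n : ℝ) ^ x) * (K * ((n : ℝ) + 1) ^ 2) := mul_le_mul hn hq (norm_nonneg _) hnn
    _ ≤ (M * (n : ℝ) ^ x) * (K * (4 * (n : ℝ) ^ 2)) :=
        mul_le_mul_of_nonneg_left (mul_le_mul_of_nonneg_left h4 hK0) hnn
    _ = (4 * K * M) * ((n : ℝ) ^ x * (n : ℝ) ^ 2) := by ring
    _ = (4 * K * M) * (n : ℝ) ^ (x + 2) := by rw [hxx]
    _ = (4 * K * M / ‖s‖) * (n : ℝ) ^ (x + 2) * ‖s‖ := by
        field_simp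

lemma alg_aux (P D dk ek s A B q0 q1 c : ℂ) (hD : D ≠ 0) (hdk : dk ≠ 0) (hek : ek ≠ 0)
    (hs : s ≠ 0) (hcore : c * (dk * ek) * s = q0 * (dk * ek) - A * B * q1) :
    P / D * c = P / D * q0 / s - P * (A * B) / (D * (dk * ek)) * q1 / s := by
  have h1 : P / D * q0 / s = (P * q0) / (D * s) := by rw [div_mul_eq_mul_div, div_div]
  have h2 : P * (A * B) / (D * (dk * ek)) * q1 / s
      = (P * (A * B) * q1) / (D * (dk * ek) * s) := by rw [div_mul_eq_mul_div, div_div]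
  have h3 : P / D * c = (P * c) / D := by rw [div_mul_eq_mul_div]
  have hb1 : D * s ≠ 0 := mul_ne_zero hD hs
  have hb2 : D * (dk * ek) * s ≠ 0 :=
    mul_ne_zero (mul_ne_zero hD (mul_ne_zero hdk hek)) hs
  rw [h1, h2, h3, div_sub_div _ _ hb1 hb2, div_eq_div_iff hD (mul_ne_zero hb1 hb2)]
  linear_combination (P * D ^ 2 * s) * hcore

lemma telescope (a b d e : ℂ)
    (hd : ∀ m : ℕ, d ≠ -(m : ℂ)) (he : ∀ m : ℕ, e ≠ -(m : ℂ))
    (hs0 : d + e - a - b - 2 ≠ 0)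
    (hquad : (a - 1) * (b - 1) = (d - 2) * (e - 2)) (k : ℕ) :
    rAux a b d e k * ((k : ℂ) + 1) = uAux a b d e k - uAux a b d e (k + 1) := by
  have hdk : d + (k : ℂ) ≠ 0 := fun h => hd k (by linear_combination h)
  have hek : e + (k : ℂ) ≠ 0 := fun h => he k (by linear_combination h)
  have hpd : poch d k ≠ 0 := poch_ne_zero hd k
  have hpe : poch e k ≠ 0 := poch_ne_zero he k
  have hr : rAux a b d e (k + 1) = poch a k * poch b k * ((a + (k : ℂ)) * (b + (k : ℂ))) /
      ((poch d k * poch e k) * ((d + (k : ℂ)) * (e + (k : ℂ)))) := by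
    rw [rAux, poch_succ, poch_succ, poch_succ, poch_succ]
    ring
  have hcore : ((k : ℂ) + 1) * ((d + (k : ℂ)) * (e + (k : ℂ))) * (d + e - a - b - 2) =
      ((k : ℂ) ^ 2 + (d + e - 2) * (k : ℂ) + (d - 1) * (e - 1)) *
        ((d + (k : ℂ)) * (e + (k : ℂ))) -
      (a + (k : ℂ)) * (b + (k : ℂ)) *
        (((k + 1 : ℕ) : ℂ) ^ 2 + (d + e - 2) * ((k + 1 : ℕ) : ℂ) + (d - 1) * (e - 1)) := by
    push_cast
    linear_combination ((d + (k : ℂ)) * (e + (k : ℂ))) * hquad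
  rw [uAux, uAux, hr, rAux]
  exact alg_aux _ _ _ _ _ _ _ _ _ _ (mul_ne_zero hpd hpe) hdk hek hs0 hcore

/-- Theorem thm:newguys, part 3. -/
theorem slater_orbit_formula_three
    (a b d e : ℂ)
    (hd : ∀ m : ℕ, d ≠ -(m : ℂ))
    (he : ∀ m : ℕ, e ≠ -(m : ℂ))
    (hconv : 0 < (d + e - a - b - 2).re)
    (hquad : (a - 1) * (b - 1) = (d - 2) * (e - 2)) :
    F32 a b 2 d e = (d - 1) * (e - 1) / (d + e - a - b - 2) := by
  have hs0 : d + e - a - b - 2 ≠ 0 := fun h => by simp [h] at hconv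
  have hF : F32 a b 2 d e = ∑' k : ℕ, rAux a b d e k * ((k : ℂ) + 1) := by
    apply tsum_congr
    intro k
    have hk : (k.factorial : ℂ) ≠ 0 := Nat.cast_ne_zero.2 k.factorial_ne_zero
    rw [rAux, poch_two, Nat.factorial_succ]
    push_cast
    field_simp [hk, poch_ne_zero hd k, poch_ne_zero he k]
  have hsum := summable_t a b d e hd he hconv
  have htel := telescope a b d e hd he hs0 hquad
  have hpartial : ∀ n, ∑ k ∈ Finset.range n, rAux a b d e k * ((k : ℂ) + 1)
      = uAux a b d e 0 - uAux a b d e n := by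
    intro n
    rw [Finset.sum_congr rfl fun k _ => htel k]
    exact Finset.sum_range_sub' (uAux a b d e) n
  have hu := u_tendsto a b d e hd he hconv
  have hlim : Tendsto (fun n => ∑ k ∈ Finset.range n, rAux a b d e k * ((k : ℂ) + 1)) atTop
      (𝓝 (uAux a b d e 0)) := by
    simp only [hpartial]
    simpa using tendsto_const_nhds.sub hu
  have heq : (∑' k : ℕ, rAux a b d e k * ((k : ℂ) + 1)) = uAux a b d e 0 :=
    tendsto_nhds_unique hsum.hasSum.tendsto_sum_nat hlim
  rw [hF, heq, uAux, rAux]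
  simp [poch]
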